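/- For every i with 1 ≤ i ≤ n, the element w(ε_i) = s_{i−1} ∘ s_{i−2} ∘ ⋯ ∘ s_1 ∘ s_0 of GL(F) lies in the coset t(ε_i)·W_0, and it is a shortest element of that coset with respect to the generators s_0, s_1, …, s_n: whenever a composition s_{j_1} ∘ s_{j_2} ∘ ⋯ ∘ s_{j_m} (with each j_k ∈ {0, 1, …, n}) lies in t(ε_i)·W_0, one has m ≥ i. -/

import Mathlib

noncomputable section

namespace CvC

/-- Ambient space `F = ℝⁿ ⊕ ℝc`. -/
abbrev F (n : ℕ) := (Fin n → ℝ) × ℝ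

/-- Bilinear form `⟨v + rc, w + sc⟩ = v ⬝ w`. -/
def bform (n : ℕ) (x y : F n) : ℝ := ∑ i, x.1 i * y.1 i

/-- The constant function `c`. -/
def cvec (n : ℕ) : F n := (0, 1)

/-- `eps n i` is the basis vector `ε_i`, for `1 ≤ i ≤ n` (1-based; junk value `0` out of range). -/
def eps (n i : ℕ) : F n :=
  if h : 1 ≤ i ∧ i ≤ n then (Pi.single (⟨i - 1, by omega⟩ : Fin n) 1, 0) else 0

lemma bform_add_left (n : ℕ) (x y z : F n) :
    bform n (x + y) z = bform n x z + bform n y z := by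
  simp [bform, add_mul, Finset.sum_add_distrib]

lemma bform_smul_left (n : ℕ) (c : ℝ) (x z : F n) :
    bform n (c • x) z = c * bform n x z := by
  simp [bform, Finset.mul_sum, mul_assoc]

lemma bform_sub_left (n : ℕ) (x y z : F n) :
    bform n (x - y) z = bform n x z - bform n y z := by
  simp [bform, sub_mul, Finset.sum_sub_distrib]

/-- Reflection `s_f(g) = g − ⟨g, f^∨⟩ f`, `f^∨ = (2/⟨f,f⟩) f`, as a linear endomorphism. -/
def reflMap (n : ℕ) (f : F n) : Module.End ℝ (F n) where
  toFun g := g - ((2 / bform n f f) * bform n g f) • f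
  map_add' x y := by
    try dsimp only
    rw [bform_add_left, mul_add, add_smul]; abel
  map_smul' c x := by
    try dsimp only
    simp only [RingHom.id_apply]
    rw [bform_smul_left, smul_sub, smul_smul, mul_left_comm]

@[simp] lemma reflMap_apply (n : ℕ) (f g : F n) :
    reflMap n f g = g - ((2 / bform n f f) * bform n g f) • f := rfl

lemma reflMap_invol (n : ℕ) (f : F n) (hf : bform n f f ≠ 0) (g : F n) :
    reflMap n f (reflMap n f g) = g := by
  simp only [reflMap_apply]
  rw [bform_sub_left, bform_smul_left, sub_sub, ← add_smul]
  have key : (2 / bform n f f) * bform n g f +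
      (2 / bform n f f) * (bform n g f - (2 / bform n f f) * bform n g f * bform n f f) = 0 := by
    field_simp
    ring
  rw [key, zero_smul, sub_zero]

/-- Translation `t(v)(f) = f − ⟨f, v⟩c`, as a linear endomorphism. -/
def tMap (n : ℕ) (v : Fin n → ℝ) : Module.End ℝ (F n) where
  toFun g := g - bform n g (v, 0) • cvec n
  map_add' x y := by
    try dsimp only
    rw [bform_add_left, add_smul]; abel
  map_smul' c x := by
    try dsimp only
    simp only [RingHom.id_apply]
    rw [bform_smul_left, smul_sub, smul_smul]

@[simp] lemma tMap_apply (n : ℕ) (v : Fin n → ℝ) (g : F n) :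
    tMap n v g = g - bform n g (v, 0) • cvec n := rfl

lemma bform_pair_add (n : ℕ) (g : F n) (v w : Fin n → ℝ) :
    bform n g (v + w, 0) = bform n g (v, 0) + bform n g (w, 0) := by
  simp [bform, mul_add, Finset.sum_add_distrib]

lemma tMap_mul (n : ℕ) (v w : Fin n → ℝ) :
    tMap n v * tMap n w = tMap n (v + w) := by
  apply LinearMap.ext; intro g
  rw [Module.End.mul_apply]
  simp only [tMap_apply]
  rw [bform_sub_left, bform_smul_left]
  have hc : bform n (cvec n) (v, 0) = 0 := by simp [bform, cvec]
  rw [hc, mul_zero, sub_zero, bform_pair_add, add_smul]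
  abel

lemma tMap_zero (n : ℕ) : tMap n 0 = 1 := by
  apply LinearMap.ext; intro g
  rw [Module.End.one_apply, tMap_apply]
  have h0 : bform n g ((0 : Fin n → ℝ), 0) = 0 := by simp [bform]
  rw [h0, zero_smul, sub_zero]

/-- Translation `t(v)` as an invertible endomorphism. -/
def tU (n : ℕ) (v : Fin n → ℝ) : (Module.End ℝ (F n))ˣ where
  val := tMap n v
  inv := tMap n (-v)
  val_inv := by rw [tMap_mul, add_neg_cancel, tMap_zero]
  inv_val := by rw [tMap_mul, neg_add_cancel, tMap_zero]

/-- Reflection `s_f` as an invertible endomorphism (junk value `1` if `⟨f,f⟩ = 0`). -/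
def reflE (n : ℕ) (f : F n) : (Module.End ℝ (F n))ˣ :=
  if hf : bform n f f ≠ 0 then
    { val := reflMap n f
      inv := reflMap n f
      val_inv := by
        apply LinearMap.ext; intro g
        rw [Module.End.mul_apply, Module.End.one_apply]
        exact reflMap_invol n f hf g
      inv_val := by
        apply LinearMap.ext; intro g
        rw [Module.End.mul_apply, Module.End.one_apply]
        exact reflMap_invol n f hf g }
  else 1

/-- The simple affine roots `a_0, a_1, …, a_n` of type `(C_n^∨, C_n)`:
`a_0 = −2ε_1 + c`, `a_j = ε_j − ε_{j+1}` for `1 ≤ j ≤ n−1`, `a_n = 2ε_n`. -/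
def aRootF (n k : ℕ) : F n :=
  if k = 0 then (-(2:ℝ)) • eps n 1 + cvec n
  else if k = n then (2:ℝ) • eps n n
  else eps n k - eps n (k + 1)

/-- The generators `s_0, s_1, …, s_n` of the extended affine Weyl group of type
`(C_n^∨, C_n)`: `s_0 = t(ε_1) ∘ s_{2ε_1}` and `s_i = s_{a_i}` for `1 ≤ i ≤ n`. -/
def sgen (n k : ℕ) : (Module.End ℝ (F n))ˣ :=
  if k = 0 then tU n (eps n 1).1 * reflE n ((2:ℝ) • eps n 1)
  else reflE n (aRootF n k)

/-- The finite Weyl group `W_0 = ⟨s_1, …, s_n⟩` of type `C_n`. -/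
def W0grp (n : ℕ) : Subgroup (Module.End ℝ (F n))ˣ :=
  Subgroup.closure (sgen n '' Set.Icc 1 n)

/-- The extended affine Weyl group `W = ⟨s_0, s_1, …, s_n⟩` of type `(C_n^∨, C_n)`. -/
def Wgrp (n : ℕ) : Subgroup (Module.End ℝ (F n))ˣ :=
  Subgroup.closure (sgen n '' Set.Icc 0 n)

/-- Product of the generators `s_k` along a list of indices. -/
def du (n : ℕ) (l : List ℕ) : (Module.End ℝ (F n))ˣ := (l.map (sgen n)).prod

/-- The weight lattice `P_{C_n} = ℤε_1 ⊕ ⋯ ⊕ ℤε_n` (as a subset of `ℝⁿ`). -/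
def PC (n : ℕ) : Set (Fin n → ℝ) := { v | ∀ i, ∃ m : ℤ, v i = m }

/-- The weight lattice `P_{B_n} = P_{C_n} + ℤ·(1/2)(ε_1 + ⋯ + ε_n)` (as a subset of `ℝⁿ`). -/
def PB (n : ℕ) : Set (Fin n → ℝ) := { v | ∃ k : ℤ, ∀ i, ∃ m : ℤ, v i = m + (k : ℝ)/2 }

/-- `O_1 = {±ε_i + rc}`. -/
def O1 (n : ℕ) : Set (F n) :=
  { x | ∃ i, 1 ≤ i ∧ i ≤ n ∧ ∃ r : ℤ,
      x = eps n i + (r : ℝ) • cvec n ∨ x = -eps n i + (r : ℝ) • cvec n }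

/-- `O_2 = {±2ε_i + 2rc}`. -/
def O2 (n : ℕ) : Set (F n) :=
  { x | ∃ i, 1 ≤ i ∧ i ≤ n ∧ ∃ r : ℤ,
      x = (2:ℝ) • eps n i + ((2*r : ℤ) : ℝ) • cvec n ∨
      x = -((2:ℝ) • eps n i) + ((2*r : ℤ) : ℝ) • cvec n }

/-- `O_3 = {±ε_i + (r + 1/2)c}`. -/
def O3 (n : ℕ) : Set (F n) :=
  { x | ∃ i, 1 ≤ i ∧ i ≤ n ∧ ∃ r : ℤ,
      x = eps n i + ((r : ℝ) + 1/2) • cvec n ∨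
      x = -eps n i + ((r : ℝ) + 1/2) • cvec n }

/-- `O_4 = {±2ε_i + (2r+1)c}`. -/
def O4 (n : ℕ) : Set (F n) :=
  { x | ∃ i, 1 ≤ i ∧ i ≤ n ∧ ∃ r : ℤ,
      x = (2:ℝ) • eps n i + ((2*r+1 : ℤ) : ℝ) • cvec n ∨
      x = -((2:ℝ) • eps n i) + ((2*r+1 : ℤ) : ℝ) • cvec n }

/-- `O_5 = {±ε_i ± ε_j + rc, i < j}`. -/
def O5 (n : ℕ) : Set (F n) :=
  { x | ∃ i j, 1 ≤ i ∧ i < j ∧ j ≤ n ∧ ∃ r : ℤ,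
      x = eps n i + eps n j + (r : ℝ) • cvec n ∨
      x = eps n i - eps n j + (r : ℝ) • cvec n ∨
      x = -eps n i + eps n j + (r : ℝ) • cvec n ∨
      x = -eps n i - eps n j + (r : ℝ) • cvec n }

/-- The five `W`-orbits `O_1, …, O_5` of the affine root system of type `(C_n^∨, C_n)`. -/
def OO (n : ℕ) : Fin 5 → Set (F n) := ![O1 n, O2 n, O3 n, O4 n, O5 n]

/-- The affine root system `S` of type `(C_n^∨, C_n)`. -/
def Sset (n : ℕ) : Set (F n) := O1 n ∪ O2 n ∪ O3 n ∪ O4 n ∪ O5 n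

/-- The set `R̃₊ = {ε_i} ∪ {2ε_i} ∪ {ε_i ± ε_j : i < j}`. -/
def Rtplus (n : ℕ) : Set (F n) :=
  { x | (∃ i, 1 ≤ i ∧ i ≤ n ∧ (x = eps n i ∨ x = (2:ℝ) • eps n i)) ∨
        (∃ i j, 1 ≤ i ∧ i < j ∧ j ≤ n ∧ (x = eps n i + eps n j ∨ x = eps n i - eps n j)) }

/-- The set of positive affine roots `S⁺`. -/
def Splus (n : ℕ) : Set (F n) :=
  { x ∈ Sset n | 0 < x.2 } ∪ (Sset n ∩ Rtplus n)

lemma sum_single_mul (n : ℕ) (j : Fin n) (v : Fin n → ℝ) :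
    ∑ k, v k * (Pi.single j 1 : Fin n → ℝ) k = v j := by
  rw [Finset.sum_eq_single j]
  · simp
  · intro k _ hk
    simp [Pi.single_apply, hk]
  · intro h; exact absurd (Finset.mem_univ j) h

lemma bform_eps_right (n : ℕ) (x : F n) (i : ℕ) (h1 : 1 ≤ i) (h2 : i ≤ n) :
    bform n x (eps n i) = x.1 ⟨i - 1, by omega⟩ := by
  unfold bform eps
  rw [dif_pos ⟨h1, h2⟩]
  exact sum_single_mul n _ x.1

lemma bform_eps_eps (n i : ℕ) (h1 : 1 ≤ i) (h2 : i ≤ n) :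
    bform n (eps n i) (eps n i) = 1 := by
  rw [bform_eps_right n _ i h1 h2]
  unfold eps
  rw [dif_pos ⟨h1, h2⟩]
  simp

/-- `π^{C∨} = π^D`: the linear map with `ε_1 ↦ c − ε_1`, `ε_i ↦ ε_i` (`i ≥ 2`), `c ↦ c`. -/
def piCMap (n : ℕ) : Module.End ℝ (F n) where
  toFun g := g - bform n g (eps n 1) • ((2:ℝ) • eps n 1 - cvec n)
  map_add' x y := by
    try dsimp only
    rw [bform_add_left, add_smul]; abel
  map_smul' c x := by
    try dsimp only
    simp only [RingHom.id_apply]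
    rw [bform_smul_left, smul_sub c, smul_smul]

@[simp] lemma piCMap_apply (n : ℕ) (g : F n) :
    piCMap n g = g - bform n g (eps n 1) • ((2:ℝ) • eps n 1 - cvec n) := rfl

lemma piCMap_invol (n : ℕ) (g : F n) : piCMap n (piCMap n g) = g := by
  rcases Nat.eq_zero_or_pos n with h0 | hpos
  · subst h0
    have he : eps 0 1 = 0 := by simp [eps]
    simp [piCMap_apply, he, bform]
  · have hE := bform_eps_eps n 1 le_rfl hpos
    have hc : bform n (cvec n) (eps n 1) = 0 := by simp [bform, cvec]
    simp only [piCMap_apply]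
    rw [bform_sub_left, bform_smul_left, bform_sub_left, bform_smul_left, hE, hc]
    rw [sub_sub, ← add_smul]
    have key : bform n g (eps n 1) +
        (bform n g (eps n 1) - bform n g (eps n 1) * (2 * 1 - 0)) = 0 := by ring
    rw [key, zero_smul, sub_zero]

/-- `π^{C∨}` as an invertible endomorphism. -/
def piCU (n : ℕ) : (Module.End ℝ (F n))ˣ where
  val := piCMap n
  inv := piCMap n
  val_inv := by
    apply LinearMap.ext; intro g
    rw [Module.End.mul_apply, Module.End.one_apply]
    exact piCMap_invol n g
  inv_val := by
    apply LinearMap.ext; intro g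
    rw [Module.End.mul_apply, Module.End.one_apply]
    exact piCMap_invol n g

/-- `π^{B∨}`: the linear map with `ε_i ↦ (1/2)c − ε_{n−i+1}` and `c ↦ c`. -/
def piBMap (n : ℕ) : Module.End ℝ (F n) where
  toFun g := (fun i => -(g.1 (Fin.rev i)), g.2 + (1/2) * ∑ i, g.1 i)
  map_add' x y := by
    try dsimp only
    refine Prod.ext ?_ ?_
    · funext i; simp [neg_add]; ring
    · simp [Finset.sum_add_distrib]; ring
  map_smul' c x := by
    try dsimp only
    simp only [RingHom.id_apply]
    refine Prod.ext ?_ ?_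
    · funext i; simp [mul_comm]
    · simp only [Prod.smul_snd, Prod.smul_fst, Pi.smul_apply, smul_eq_mul, Finset.mul_sum,
        mul_add]
      congr 1
      exact Finset.sum_congr rfl fun i _ => by ring

@[simp] lemma piBMap_apply (n : ℕ) (g : F n) :
    piBMap n g = (fun i => -(g.1 (Fin.rev i)), g.2 + (1/2) * ∑ i, g.1 i) := rfl

lemma piBMap_invol (n : ℕ) (g : F n) : piBMap n (piBMap n g) = g := by
  simp only [piBMap_apply]
  refine Prod.ext ?_ ?_
  · funext i; simp
  · have h : ∑ i, -(g.1 (Fin.rev i)) = -∑ i, g.1 i := by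
      rw [← Finset.sum_neg_distrib]
      exact Equiv.sum_comp (Equiv.mk Fin.rev Fin.rev Fin.rev_rev Fin.rev_rev) (fun i => -(g.1 i))
    dsimp only
    rw [h]
    ring

/-- `π^{B∨}` as an invertible endomorphism. -/
def piBU (n : ℕ) : (Module.End ℝ (F n))ˣ where
  val := piBMap n
  inv := piBMap n
  val_inv := by
    apply LinearMap.ext; intro g
    rw [Module.End.mul_apply, Module.End.one_apply]
    exact piBMap_invol n g
  inv_val := by
    apply LinearMap.ext; intro g
    rw [Module.End.mul_apply, Module.End.one_apply]
    exact piBMap_invol n g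

/-- The affine root `a_0^{C∨} = −(ε_1 + ε_2) + c` of Ram–Yip type `C_n^∨`. -/
def a0C (n : ℕ) : F n := -(eps n 1 + eps n 2) + cvec n

/-- The reflection `s_0^{C∨} = s_{a_0^{C∨}}`. -/
def s0C (n : ℕ) : (Module.End ℝ (F n))ˣ := reflE n (a0C n)

/-- The extended affine Weyl group of Ram–Yip type `C_n^∨`:
`W^{C∨,RY} = ⟨s_0^{C∨}, s_1, …, s_n, π^{C∨}⟩`. -/
def WCRY (n : ℕ) : Subgroup (Module.End ℝ (F n))ˣ :=
  Subgroup.closure ({s0C n, piCU n} ∪ sgen n '' Set.Icc 1 n)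

/-- The extended affine Weyl group of Ram–Yip type `B_n^∨`:
`W^{B∨,RY} = ⟨s_0, s_1, …, s_n, π^{B∨}⟩`. -/
def WBRY (n : ℕ) : Subgroup (Module.End ℝ (F n))ˣ :=
  Subgroup.closure (insert (piBU n) (sgen n '' Set.Icc 0 n))

/-- The subgroup generated by `W_0` together with all the translations `t(μ)`, `μ ∈ P_{B_n}`. -/
def WBtrans (n : ℕ) : Subgroup (Module.End ℝ (F n))ˣ :=
  Subgroup.closure ((sgen n '' Set.Icc 1 n) ∪ (tU n '' PB n))

/-- The defining relators of the extended affine Weyl group of type `(C_n^∨, C_n)`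
on the generators `σ_0, …, σ_n`. -/
def rels (n : ℕ) : Set (FreeGroup (Fin (n + 1))) :=
  { r | (∃ i : Fin (n+1), r = FreeGroup.of i * FreeGroup.of i) ∨
        (∃ i j : Fin (n+1), ((i:ℕ) + 1 < (j:ℕ) ∨ (j:ℕ) + 1 < (i:ℕ)) ∧
          r = FreeGroup.of i * FreeGroup.of j * (FreeGroup.of i)⁻¹ * (FreeGroup.of j)⁻¹) ∨
        (∃ i j : Fin (n+1), 1 ≤ (i:ℕ) ∧ (i:ℕ) ≤ n - 2 ∧ (j:ℕ) = (i:ℕ) + 1 ∧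
          r = FreeGroup.of i * FreeGroup.of j * FreeGroup.of i *
              ((FreeGroup.of j)⁻¹ * (FreeGroup.of i)⁻¹ * (FreeGroup.of j)⁻¹)) ∨
        (∃ i j : Fin (n+1), ((i:ℕ) = 0 ∨ (i:ℕ) = n - 1) ∧ (j:ℕ) = (i:ℕ) + 1 ∧
          r = FreeGroup.of i * FreeGroup.of j * FreeGroup.of i * FreeGroup.of j *
              ((FreeGroup.of i)⁻¹ * (FreeGroup.of j)⁻¹ * (FreeGroup.of i)⁻¹ *
                (FreeGroup.of j)⁻¹)) }


/-! ### Auxiliary machinery for Statement 16 -/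

section Aux

set_option maxHeartbeats 1000000

/-- 0-based standard basis vectors of `F n`. -/
def Ev (n : ℕ) (a : Fin n) : F n := (Pi.single a 1, 0)

lemma bform_Ev_right (n : ℕ) (x : F n) (a : Fin n) : bform n x (Ev n a) = x.1 a :=
  sum_single_mul n a x.1

lemma bform_comm (n : ℕ) (x y : F n) : bform n x y = bform n y x :=
  Finset.sum_congr rfl fun i _ => mul_comm _ _

lemma bform_Ev_left (n : ℕ) (x : F n) (a : Fin n) : bform n (Ev n a) x = x.1 a := by
  rw [bform_comm]; exact bform_Ev_right n x a

lemma bform_smul_right (n : ℕ) (c : ℝ) (x z : F n) :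
    bform n x (c • z) = c * bform n x z := by
  rw [bform_comm, bform_smul_left, bform_comm]

lemma bform_sub_right (n : ℕ) (x y z : F n) :
    bform n x (y - z) = bform n x y - bform n x z := by
  rw [bform_comm, bform_sub_left, bform_comm n y x, bform_comm n z x]

lemma eps_eq_Ev (n i : ℕ) (h1 : 1 ≤ i) (h2 : i ≤ n) :
    eps n i = Ev n ⟨i - 1, by omega⟩ := by
  unfold eps Ev; rw [dif_pos ⟨h1, h2⟩]

lemma Ev_fst_apply (n : ℕ) (a b : Fin n) : (Ev n a).1 b = if b = a then 1 else 0 := by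
  simp [Ev, Pi.single_apply]

lemma reflE_val (n : ℕ) (f : F n) (hf : bform n f f ≠ 0) :
    (reflE n f).val = reflMap n f := by
  unfold reflE; rw [dif_pos hf]

/-- Closed form for `s_k`, `1 ≤ k ≤ n−1`. -/
lemma sgen_mid_val (n k : ℕ) (hk1 : 1 ≤ k) (hk2 : k ≤ n - 1) (hn : 2 ≤ n) (g : F n) :
    (sgen n k).val g = g - (g.1 ⟨k-1, by omega⟩ - g.1 ⟨k, by omega⟩) •
      (Ev n ⟨k-1, by omega⟩ - Ev n ⟨k, by omega⟩) := by
  have hk0 : k ≠ 0 := by omega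
  have hkn : k ≠ n := by omega
  have hroot : aRootF n k = Ev n ⟨k-1, by omega⟩ - Ev n ⟨k, by omega⟩ := by
    unfold aRootF
    rw [if_neg hk0, if_neg hkn, eps_eq_Ev n k hk1 (by omega),
      eps_eq_Ev n (k+1) (by omega) (by omega)]
    have hfe : (⟨k+1-1, by omega⟩ : Fin n) = ⟨k, by omega⟩ := by
      apply Fin.ext
      simp
    rw [hfe]
  have hne : (⟨k-1, by omega⟩ : Fin n) ≠ ⟨k, by omega⟩ :=
    Fin.ne_of_val_ne (by simp; omega)
  have hb : bform n (aRootF n k) (aRootF n k) = 2 := by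
    rw [hroot, bform_sub_left, bform_Ev_left, bform_Ev_left]
    simp only [Prod.fst_sub, Pi.sub_apply, Ev_fst_apply, if_pos rfl, if_neg hne,
      if_neg hne.symm]
    norm_num
  unfold sgen
  rw [if_neg hk0, reflE_val n _ (by rw [hb]; norm_num), reflMap_apply, hb, hroot,
    bform_sub_right, bform_Ev_right, bform_Ev_right]
  norm_num

lemma sgen_mid_Ev_lo (n k : ℕ) (hk1 : 1 ≤ k) (hk2 : k ≤ n - 1) (hn : 2 ≤ n) :
    (sgen n k).val (Ev n ⟨k-1, by omega⟩) = Ev n ⟨k, by omega⟩ := by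
  rw [sgen_mid_val n k hk1 hk2 hn]
  have hne : (⟨k, by omega⟩ : Fin n) ≠ ⟨k-1, by omega⟩ :=
    Fin.ne_of_val_ne (by simp; omega)
  rw [Ev_fst_apply, Ev_fst_apply, if_pos rfl, if_neg hne]
  match_scalars <;> ring

lemma sgen_mid_Ev_hi (n k : ℕ) (hk1 : 1 ≤ k) (hk2 : k ≤ n - 1) (hn : 2 ≤ n) :
    (sgen n k).val (Ev n ⟨k, by omega⟩) = Ev n ⟨k-1, by omega⟩ := by
  rw [sgen_mid_val n k hk1 hk2 hn]
  have hne : (⟨k-1, by omega⟩ : Fin n) ≠ ⟨k, by omega⟩ :=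
    Fin.ne_of_val_ne (by simp; omega)
  rw [Ev_fst_apply, Ev_fst_apply, if_pos rfl, if_neg hne]
  match_scalars <;> ring

lemma sgen_mid_Ev_other (n k : ℕ) (hk1 : 1 ≤ k) (hk2 : k ≤ n - 1) (hn : 2 ≤ n)
    (a : Fin n) (h1 : (a : ℕ) ≠ k - 1) (h2 : (a : ℕ) ≠ k) :
    (sgen n k).val (Ev n a) = Ev n a := by
  rw [sgen_mid_val n k hk1 hk2 hn]
  have e1 : (⟨k-1, by omega⟩ : Fin n) ≠ a := fun he => h1 (congrArg Fin.val he).symm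
  have e2 : (⟨k, by omega⟩ : Fin n) ≠ a := fun he => h2 (congrArg Fin.val he).symm
  rw [Ev_fst_apply, Ev_fst_apply, if_neg e1, if_neg e2]
  match_scalars <;> ring

lemma sgen_mid_cvec (n k : ℕ) (hk1 : 1 ≤ k) (hk2 : k ≤ n - 1) (hn : 2 ≤ n) :
    (sgen n k).val (cvec n) = cvec n := by
  rw [sgen_mid_val n k hk1 hk2 hn]
  have h0 : (cvec n).1 = 0 := rfl
  rw [h0]
  simp

/-- Closed form for `s_n`. -/
lemma sgen_top_val (n : ℕ) (hn : 2 ≤ n) (g : F n) :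
    (sgen n n).val g = g - (2 * g.1 ⟨n-1, by omega⟩) • Ev n ⟨n-1, by omega⟩ := by
  have hn0 : n ≠ 0 := by omega
  have hroot : aRootF n n = (2:ℝ) • Ev n ⟨n-1, by omega⟩ := by
    unfold aRootF
    rw [if_neg hn0, if_pos rfl, eps_eq_Ev n n (by omega) le_rfl]
  have hb : bform n (aRootF n n) (aRootF n n) = 4 := by
    rw [hroot, bform_smul_left, bform_smul_right, bform_Ev_left, Ev_fst_apply, if_pos rfl]
    norm_num
  unfold sgen
  rw [if_neg hn0, reflE_val n _ (by rw [hb]; norm_num), reflMap_apply, hb, hroot,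
    bform_smul_right, bform_Ev_right]
  match_scalars <;> ring

lemma sgen_top_Ev_top (n : ℕ) (hn : 2 ≤ n) :
    (sgen n n).val (Ev n ⟨n-1, by omega⟩) = -Ev n ⟨n-1, by omega⟩ := by
  rw [sgen_top_val n hn, Ev_fst_apply, if_pos rfl]
  match_scalars <;> ring

lemma sgen_top_Ev_other (n : ℕ) (hn : 2 ≤ n) (a : Fin n) (h : (a : ℕ) ≠ n - 1) :
    (sgen n n).val (Ev n a) = Ev n a := by
  have e1 : (⟨n-1, by omega⟩ : Fin n) ≠ a := fun he => h (congrArg Fin.val he).symm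
  rw [sgen_top_val n hn, Ev_fst_apply, if_neg e1]
  match_scalars <;> ring

lemma sgen_top_cvec (n : ℕ) (hn : 2 ≤ n) : (sgen n n).val (cvec n) = cvec n := by
  rw [sgen_top_val n hn]
  have h0 : (cvec n).1 = 0 := rfl
  rw [h0]
  simp

/-- Closed form for `s_0`. -/
lemma sgen_zero_val (n : ℕ) (hn : 2 ≤ n) (g : F n) :
    (sgen n 0).val g = g - (2 * g.1 ⟨0, by omega⟩) • Ev n ⟨0, by omega⟩
      + g.1 ⟨0, by omega⟩ • cvec n := by
  have heps : eps n 1 = Ev n ⟨0, by omega⟩ := eps_eq_Ev n 1 le_rfl (by omega)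
  have hb : bform n ((2:ℝ) • eps n 1) ((2:ℝ) • eps n 1) = 4 := by
    rw [heps, bform_smul_left, bform_smul_right, bform_Ev_left, Ev_fst_apply, if_pos rfl]
    norm_num
  unfold sgen
  rw [if_pos rfl]
  have hval : (tU n (eps n 1).1 * reflE n ((2:ℝ) • eps n 1)).val g
      = (tU n (eps n 1).1).val ((reflE n ((2:ℝ) • eps n 1)).val g) := rfl
  rw [hval, reflE_val n _ (by rw [hb]; norm_num), reflMap_apply, hb]
  have htu : (tU n (eps n 1).1).val = tMap n (eps n 1).1 := rfl
  rw [htu, tMap_apply]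
  have hv : ((eps n 1).1, (0:ℝ)) = Ev n ⟨0, by omega⟩ := by rw [heps]; rfl
  rw [hv, heps]
  simp only [bform_sub_left, bform_smul_left, bform_smul_right, bform_Ev_right,
    bform_Ev_left, Ev_fst_apply, eq_self_iff_true, if_true, Prod.fst_sub, Pi.sub_apply,
    Prod.smul_fst, Pi.smul_apply, smul_eq_mul]
  match_scalars <;> ring

lemma sgen_zero_Ev_zero (n : ℕ) (hn : 2 ≤ n) :
    (sgen n 0).val (Ev n ⟨0, by omega⟩) = -Ev n ⟨0, by omega⟩ + cvec n := by
  rw [sgen_zero_val n hn, Ev_fst_apply, if_pos rfl]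
  match_scalars <;> ring

lemma sgen_zero_Ev_other (n : ℕ) (hn : 2 ≤ n) (a : Fin n) (h : (a : ℕ) ≠ 0) :
    (sgen n 0).val (Ev n a) = Ev n a := by
  have e1 : (⟨0, by omega⟩ : Fin n) ≠ a := fun he => h (congrArg Fin.val he).symm
  rw [sgen_zero_val n hn, Ev_fst_apply, if_neg e1]
  match_scalars <;> ring

lemma sgen_zero_cvec (n : ℕ) (hn : 2 ≤ n) : (sgen n 0).val (cvec n) = cvec n := by
  rw [sgen_zero_val n hn]
  have h0 : (cvec n).1 ⟨0, by omega⟩ = 0 := rfl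
  rw [h0]
  simp

end Aux

section Aux2

set_option maxHeartbeats 1000000

lemma du_nil (n : ℕ) : du n [] = 1 := rfl

lemma du_cons (n k : ℕ) (L : List ℕ) : du n (k :: L) = sgen n k * du n L := by
  unfold du; rw [List.map_cons, List.prod_cons]

lemma du_append (n : ℕ) (L M : List ℕ) : du n (L ++ M) = du n L * du n M := by
  unfold du; rw [List.map_append, List.prod_append]

lemma du_concat (n : ℕ) (L : List ℕ) (k : ℕ) : du n (L ++ [k]) = du n L * sgen n k := by
  rw [du_append, du_cons, du_nil, mul_one]

lemma mul_val_apply (n : ℕ) (u v : (Module.End ℝ (F n))ˣ) (x : F n) :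
    (u * v).val x = u.val (v.val x) := rfl

lemma sgen_cvec (n k : ℕ) (hn : 2 ≤ n) (hk : k ≤ n) :
    (sgen n k).val (cvec n) = cvec n := by
  rcases Nat.eq_zero_or_pos k with h | h
  · subst h; exact sgen_zero_cvec n hn
  · rcases eq_or_ne k n with h' | h'
    · subst h'; exact sgen_top_cvec _ hn
    · exact sgen_mid_cvec n k h (by omega) hn

lemma du_cvec (n : ℕ) (hn : 2 ≤ n) (L : List ℕ) (hL : ∀ k ∈ L, k ≤ n) :
    (du n L).val (cvec n) = cvec n := by
  induction L with
  | nil => rfl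
  | cons k L ih =>
    rw [du_cons, mul_val_apply, ih (fun j hj => hL j (List.mem_cons_of_mem _ hj)),
      sgen_cvec n k hn (hL k (List.mem_cons_self))]

/-- Coordinates of a generic point in the interior of the fundamental alcove. -/
def pvec (n : ℕ) (j : Fin n) : ℝ := ((n : ℝ) - j) / (2*n + 2)

lemma pvec_pos (n : ℕ) (j : Fin n) : 0 < pvec n j := by
  have hj : (j : ℝ) < n := by exact_mod_cast j.isLt
  have h2 : (0:ℝ) < 2*n+2 := by positivity
  exact div_pos (by linarith) h2

lemma pvec_lt_half (n : ℕ) (j : Fin n) : pvec n j < 1/2 := by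
  have hj : (0:ℝ) ≤ (j:ℝ) := by positivity
  have h2 : (0:ℝ) < 2*n+2 := by positivity
  unfold pvec
  rw [div_lt_iff₀ h2]
  push_cast
  linarith

lemma pvec_inj (n : ℕ) (j j' : Fin n) (h : pvec n j = pvec n j') : j = j' := by
  unfold pvec at h
  have h2 : (0:ℝ) < 2*n+2 := by positivity
  rw [div_eq_div_iff (ne_of_gt h2) (ne_of_gt h2)] at h
  have h3 := mul_right_cancel₀ (ne_of_gt h2) h
  have h4 : (j:ℝ) = (j':ℝ) := by linarith
  exact Fin.ext (by exact_mod_cast h4)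

/-- The linear functional `λ_p`. -/
def lamP (n : ℕ) (x : F n) : ℝ := (∑ j, pvec n j * x.1 j) + x.2

lemma lamP_add (n : ℕ) (x y : F n) : lamP n (x + y) = lamP n x + lamP n y := by
  unfold lamP
  simp only [Prod.fst_add, Pi.add_apply, Prod.snd_add, mul_add, Finset.sum_add_distrib]
  ring

lemma lamP_neg (n : ℕ) (x : F n) : lamP n (-x) = -lamP n x := by
  unfold lamP
  simp only [Prod.fst_neg, Pi.neg_apply, Prod.snd_neg, mul_neg, Finset.sum_neg_distrib]
  ring

lemma lamP_smul (n : ℕ) (c : ℝ) (x : F n) : lamP n (c • x) = c * lamP n x := by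
  unfold lamP
  simp only [Prod.smul_fst, Prod.smul_snd, Pi.smul_apply, smul_eq_mul]
  rw [mul_add, Finset.mul_sum]
  congr 1
  exact Finset.sum_congr rfl fun j _ => by ring

lemma lamP_Ev (n : ℕ) (a : Fin n) : lamP n (Ev n a) = pvec n a := by
  unfold lamP Ev
  rw [sum_single_mul n a (pvec n)]
  simp

lemma lamP_cvec (n : ℕ) : lamP n (cvec n) = 1 := by
  unfold lamP cvec
  simp

lemma lamP_sub (n : ℕ) (x y : F n) : lamP n (x - y) = lamP n x - lamP n y := by
  rw [sub_eq_add_neg, lamP_add, lamP_neg]; ring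

/-- The point tracked by a word. -/
def Qf (n : ℕ) (u : (Module.End ℝ (F n))ˣ) (a : Fin n) : ℝ := lamP n (u.val (Ev n a))

/-- Value of an abstract state entry `(sign, label, integer)`. -/
def sval (n : ℕ) (t : Bool × Fin n × ℤ) : ℝ :=
  (if t.1 then 1 else -1) * pvec n t.2.1 + t.2.2

/-- Cost of a state entry sitting at slot `a`. -/
def gcost (n : ℕ) (a : Fin n) (t : Bool × Fin n × ℤ) : ℤ :=
  if t.2.2 = 0 then (if (a.val:ℤ) ≤ (t.2.1.val:ℤ) then (t.2.1.val:ℤ) - (a.val:ℤ) else 0)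
  else (if 1 ≤ t.2.2 then 2*t.2.2 - 1 else -(2*t.2.2)) + (t.2.1.val:ℤ)

def Phi (n : ℕ) (s : Fin n → Bool × Fin n × ℤ) : ℤ := ∑ a, gcost n a (s a)

lemma gcost_nonneg (n : ℕ) (a : Fin n) (t : Bool × Fin n × ℤ) : 0 ≤ gcost n a t := by
  unfold gcost; split_ifs <;> omega

lemma Phi_update (n : ℕ) (s : Fin n → Bool × Fin n × ℤ) (io : Fin n) (t : Bool × Fin n × ℤ) :
    Phi n (Function.update s io t) = Phi n s - gcost n io (s io) + gcost n io t := by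
  unfold Phi
  have h : ∀ a, gcost n a (Function.update s io t a)
      = Function.update (fun a => gcost n a (s a)) io (gcost n io t) a := by
    intro a
    by_cases ha : a = io
    · subst ha; simp
    · simp [Function.update_of_ne ha]
  rw [Finset.sum_congr rfl (fun a _ => h a),
    Finset.sum_update_of_mem (Finset.mem_univ io),
    Finset.sum_eq_sum_sdiff_singleton_add (Finset.mem_univ io) (fun a => gcost n a (s a))]
  ring

lemma gcost_flip0 (n : ℕ) (i0 : Fin n) (h0 : i0.val = 0) (t : Bool × Fin n × ℤ) :
    gcost n i0 (!t.1, t.2.1, 1 - t.2.2) ≤ gcost n i0 t + 1 := by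
  obtain ⟨b, j, m⟩ := t
  unfold gcost
  dsimp only
  split_ifs <;> omega

lemma gcost_flipn (n : ℕ) (i1 : Fin n) (t : Bool × Fin n × ℤ) :
    gcost n i1 (!t.1, t.2.1, -t.2.2) ≤ gcost n i1 t + 1 := by
  obtain ⟨b, j, m⟩ := t
  unfold gcost
  dsimp only
  split_ifs <;> omega

lemma gcost_slot_mono (n : ℕ) (a a' : Fin n) (h : a'.val = a.val + 1) (t : Bool × Fin n × ℤ) :
    gcost n a' t ≤ gcost n a t ∧ gcost n a t ≤ gcost n a' t + 1 := by
  unfold gcost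
  split_ifs <;> constructor <;> omega

lemma sval_flip0 (n : ℕ) (t : Bool × Fin n × ℤ) :
    1 - sval n t = sval n (!t.1, t.2.1, 1 - t.2.2) := by
  obtain ⟨b, j, m⟩ := t
  cases b <;> simp [sval] <;> push_cast <;> ring

lemma sval_neg (n : ℕ) (t : Bool × Fin n × ℤ) :
    - sval n t = sval n (!t.1, t.2.1, -t.2.2) := by
  obtain ⟨b, j, m⟩ := t
  cases b <;> simp [sval] <;> push_cast <;> ring

/-- Recursion for `Qf` under right multiplication by `s₀`. -/
lemma Qf_mul_zero (n : ℕ) (hn : 2 ≤ n) (u : (Module.End ℝ (F n))ˣ)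
    (hu : u.val (cvec n) = cvec n) :
    Qf n (u * sgen n 0) ⟨0, by omega⟩ = 1 - Qf n u ⟨0, by omega⟩ ∧
    ∀ a : Fin n, (a:ℕ) ≠ 0 → Qf n (u * sgen n 0) a = Qf n u a := by
  constructor
  · unfold Qf
    rw [mul_val_apply, sgen_zero_Ev_zero n hn, map_add, map_neg, hu, lamP_add, lamP_neg,
      lamP_cvec]
    ring
  · intro a ha
    unfold Qf
    rw [mul_val_apply, sgen_zero_Ev_other n hn a ha]

/-- Recursion for `Qf` under right multiplication by `s_n`. -/
lemma Qf_mul_top (n : ℕ) (hn : 2 ≤ n) (u : (Module.End ℝ (F n))ˣ) :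
    Qf n (u * sgen n n) ⟨n-1, by omega⟩ = - Qf n u ⟨n-1, by omega⟩ ∧
    ∀ a : Fin n, (a:ℕ) ≠ n-1 → Qf n (u * sgen n n) a = Qf n u a := by
  constructor
  · unfold Qf
    rw [mul_val_apply, sgen_top_Ev_top n hn, map_neg, lamP_neg]
  · intro a ha
    unfold Qf
    rw [mul_val_apply, sgen_top_Ev_other n hn a ha]

/-- Recursion for `Qf` under right multiplication by `s_k`, `1 ≤ k ≤ n−1`. -/
lemma Qf_mul_mid (n k : ℕ) (hk1 : 1 ≤ k) (hk2 : k ≤ n - 1) (hn : 2 ≤ n)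
    (u : (Module.End ℝ (F n))ˣ) :
    Qf n (u * sgen n k) ⟨k-1, by omega⟩ = Qf n u ⟨k, by omega⟩ ∧
    Qf n (u * sgen n k) ⟨k, by omega⟩ = Qf n u ⟨k-1, by omega⟩ ∧
    ∀ a : Fin n, (a:ℕ) ≠ k-1 → (a:ℕ) ≠ k → Qf n (u * sgen n k) a = Qf n u a := by
  refine ⟨?_, ?_, ?_⟩
  · unfold Qf
    rw [mul_val_apply, sgen_mid_Ev_lo n k hk1 hk2 hn]
  · unfold Qf
    rw [mul_val_apply, sgen_mid_Ev_hi n k hk1 hk2 hn]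
  · intro a h1 h2
    unfold Qf
    rw [mul_val_apply, sgen_mid_Ev_other n k hk1 hk2 hn a h1 h2]

/-- Key induction: every word can be tracked by a state of cost at most its length. -/
lemma key_states (n : ℕ) (hn : 2 ≤ n) (L : List ℕ) (hL : ∀ k ∈ L, k ≤ n) :
    ∃ s : Fin n → Bool × Fin n × ℤ,
      (∀ a, Qf n (du n L) a = sval n (s a)) ∧ Phi n s ≤ (L.length : ℤ) := by
  induction L using List.reverseRecOn with
  | nil =>
      refine ⟨fun a => (true, a, 0), ?_, ?_⟩
      · intro a
        have h1 : Qf n (du n []) a = pvec n a := by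
          unfold Qf
          have h : (du n []).val (Ev n a) = Ev n a := rfl
          rw [h, lamP_Ev]
        rw [h1]; unfold sval; simp
      · unfold Phi
        have h0 : ∀ a : Fin n, gcost n a (true, a, (0:ℤ)) = 0 := by
          intro a; unfold gcost; simp
        rw [Finset.sum_congr rfl (fun a _ => h0 a)]
        simp
  | append_singleton L k ih =>
      have hk : k ≤ n := hL k (by simp)
      have hL' : ∀ j ∈ L, j ≤ n := fun j hj => hL j (by simp [hj])
      obtain ⟨s, hs, hΦ⟩ := ih hL'
      have hcv : (du n L).val (cvec n) = cvec n := du_cvec n hn L hL'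
      rw [du_concat]
      have hlen : ((L ++ [k]).length : ℤ) = (L.length : ℤ) + 1 := by simp
      rw [hlen]
      rcases Nat.eq_zero_or_pos k with hk0 | hk1
      · -- k = 0
        subst hk0
        obtain ⟨hq0, hqa⟩ := Qf_mul_zero n hn (du n L) hcv
        set i0 : Fin n := ⟨0, by omega⟩ with hi0
        refine ⟨Function.update s i0 (!(s i0).1, (s i0).2.1, 1 - (s i0).2.2), ?_, ?_⟩
        · intro a
          by_cases ha : a = i0
          · subst ha
            rw [hq0, hs i0, Function.update_self, sval_flip0]
          · have ha' : (a:ℕ) ≠ 0 := fun h => ha (Fin.ext h)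
            rw [hqa a ha', hs a, Function.update_of_ne ha]
        · rw [Phi_update]
          have := gcost_flip0 n i0 rfl (s i0)
          omega
      · rcases eq_or_ne k n with hkn | hkn
        · -- k = n
          rw [hkn]
          obtain ⟨hq0, hqa⟩ := Qf_mul_top n hn (du n L)
          set i1 : Fin n := ⟨n-1, by omega⟩ with hi1
          refine ⟨Function.update s i1 (!(s i1).1, (s i1).2.1, -(s i1).2.2), ?_, ?_⟩
          · intro a
            by_cases ha : a = i1
            · subst ha
              rw [hq0, hs i1, Function.update_self, sval_neg]
            · have ha' : (a:ℕ) ≠ n-1 := fun h => ha (Fin.ext h)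
              rw [hqa a ha', hs a, Function.update_of_ne ha]
          · rw [Phi_update]
            have := gcost_flipn n i1 (s i1)
            omega
        · -- 1 ≤ k ≤ n-1
          have hk2 : k ≤ n - 1 := by omega
          obtain ⟨hqlo, hqhi, hqa⟩ := Qf_mul_mid n k hk1 hk2 hn (du n L)
          set i1 : Fin n := ⟨k-1, by omega⟩ with hi1
          set i2 : Fin n := ⟨k, by omega⟩ with hi2
          have hne : i1 ≠ i2 := Fin.ne_of_val_ne (by simp [hi1, hi2]; omega)
          refine ⟨Function.update (Function.update s i1 (s i2)) i2 (s i1), ?_, ?_⟩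
          · intro a
            by_cases ha1 : a = i1
            · subst ha1
              rw [hqlo, hs i2, Function.update_of_ne hne, Function.update_self]
            · by_cases ha2 : a = i2
              · subst ha2
                rw [hqhi, hs i1, Function.update_self]
              · have h1 : (a:ℕ) ≠ k-1 := fun h => ha1 (Fin.ext h)
                have h2 : (a:ℕ) ≠ k := fun h => ha2 (Fin.ext h)
                rw [hqa a h1 h2, hs a, Function.update_of_ne ha2,
                  Function.update_of_ne ha1]
          · rw [Phi_update, Phi_update]
            simp only [Function.update_of_ne (Ne.symm hne)]
            have hmono1 := gcost_slot_mono n i1 i2 (by simp [hi1, hi2]; omega) (s i1)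
            have hmono2 := gcost_slot_mono n i1 i2 (by simp [hi1, hi2]; omega) (s i2)
            omega

end Aux2

section Aux3

set_option maxHeartbeats 1000000

/-- Elements of `W₀` act as signed permutations on the basis. -/
lemma W0_signed (n : ℕ) (hn : 2 ≤ n) (w : (Module.End ℝ (F n))ˣ) (hw : w ∈ W0grp n) :
    ∃ π : Equiv.Perm (Fin n), ∀ a, ∃ ε : ℝ, (ε = 1 ∨ ε = -1) ∧
      w.val (Ev n a) = ε • Ev n (π a) := by
  unfold W0grp at hw
  induction hw using Subgroup.closure_induction with
  | mem x hx =>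
      obtain ⟨k, hk, rfl⟩ := hx
      have hk1 : 1 ≤ k := hk.1
      have hk2 : k ≤ n := hk.2
      rcases eq_or_ne k n with hkn | hkn
      · refine ⟨Equiv.refl _, fun a => ?_⟩
        by_cases ha : (a:ℕ) = n-1
        · refine ⟨-1, Or.inr rfl, ?_⟩
          have hae : a = ⟨n-1, by omega⟩ := Fin.ext ha
          rw [hkn, hae, sgen_top_Ev_top n hn]
          simp
        · refine ⟨1, Or.inl rfl, ?_⟩
          rw [hkn, sgen_top_Ev_other n hn a ha, one_smul]
          rfl
      · have hk2' : k ≤ n - 1 := by omega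
        refine ⟨Equiv.swap ⟨k-1, by omega⟩ ⟨k, by omega⟩, fun a => ?_⟩
        refine ⟨1, Or.inl rfl, ?_⟩
        rw [one_smul]
        by_cases ha1 : a = ⟨k-1, by omega⟩
        · rw [ha1, sgen_mid_Ev_lo n k hk1 hk2' hn, Equiv.swap_apply_left]
        · by_cases ha2 : a = ⟨k, by omega⟩
          · rw [ha2, sgen_mid_Ev_hi n k hk1 hk2' hn, Equiv.swap_apply_right]
          · rw [sgen_mid_Ev_other n k hk1 hk2' hn a (fun h => ha1 (Fin.ext h))
              (fun h => ha2 (Fin.ext h)), Equiv.swap_apply_of_ne_of_ne ha1 ha2]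
  | one =>
      refine ⟨Equiv.refl _, fun a => ⟨1, Or.inl rfl, ?_⟩⟩
      rw [one_smul]
      rfl
  | mul x y hx hy ihx ihy =>
      obtain ⟨π1, h1⟩ := ihx
      obtain ⟨π2, h2⟩ := ihy
      refine ⟨π2.trans π1, fun a => ?_⟩
      obtain ⟨ε2, hε2, hx2⟩ := h2 a
      obtain ⟨ε1, hε1, hx1⟩ := h1 (π2 a)
      refine ⟨ε2 * ε1, ?_, ?_⟩
      · rcases hε1 with rfl|rfl <;> rcases hε2 with rfl|rfl <;> norm_num
      · rw [mul_val_apply, hx2, map_smul, hx1, smul_smul]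
        rfl
  | inv x hx ihx =>
      obtain ⟨π, h⟩ := ihx
      refine ⟨π.symm, fun a => ?_⟩
      obtain ⟨ε, hε, hx1⟩ := h (π.symm a)
      refine ⟨ε, hε, ?_⟩
      have hee : ε * ε = 1 := by rcases hε with rfl|rfl <;> norm_num
      have h2 : x.val (ε • Ev n (π.symm a)) = Ev n a := by
        rw [map_smul, hx1, smul_smul, hee, one_smul, Equiv.apply_symm_apply]
      calc x⁻¹.val (Ev n a) = x⁻¹.val (x.val (ε • Ev n (π.symm a))) := by rw [h2]
        _ = ε • Ev n (π.symm a) := by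
            rw [← mul_val_apply, inv_mul_cancel]
            rfl

lemma int_eq_of_close (m m' : ℤ) (x y : ℝ) (hx1 : -(1/2) < x) (hx2 : x < 1/2)
    (hy1 : -(1/2) < y) (hy2 : y < 1/2) (h : x + m = y + m') : m = m' ∧ x = y := by
  have l1 : ((m - m' : ℤ):ℝ) < 1 := by push_cast; linarith
  have l2 : (-1:ℝ) < ((m - m' : ℤ):ℝ) := by push_cast; linarith
  have a1 : (m - m' : ℤ) < 1 := by exact_mod_cast l1
  have a2 : (-1:ℤ) < (m - m' : ℤ) := by exact_mod_cast l2
  have hm : m = m' := by omega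
  subst hm
  refine ⟨rfl, ?_⟩
  have : (m:ℝ) = (m:ℝ) := rfl
  linarith

lemma sval_determined (n : ℕ) (b b' : Bool) (j j' : Fin n) (m m' : ℤ)
    (h : sval n (b, j, m) = sval n (b', j', m')) : b = b' ∧ j = j' ∧ m = m' := by
  have hp := pvec_pos n j
  have hp2 := pvec_lt_half n j
  have hq := pvec_pos n j'
  have hq2 := pvec_lt_half n j'
  unfold sval at h
  dsimp only at h
  cases b <;> cases b' <;> norm_num at h
  · -- false, false : -p j + m = -p j' + m'
    obtain ⟨hm, hxy⟩ := int_eq_of_close m m' (-pvec n j) (-pvec n j')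
      (by linarith) (by linarith) (by linarith) (by linarith) (by linarith)
    exact ⟨rfl, pvec_inj n j j' (by linarith), hm⟩
  · -- false, true
    obtain ⟨hm, hxy⟩ := int_eq_of_close m m' (-pvec n j) (pvec n j')
      (by linarith) (by linarith) (by linarith) (by linarith) (by linarith)
    exfalso; linarith
  · -- true, false
    obtain ⟨hm, hxy⟩ := int_eq_of_close m m' (pvec n j) (-pvec n j')
      (by linarith) (by linarith) (by linarith) (by linarith) (by linarith)
    exfalso; linarith
  · -- true, true
    obtain ⟨hm, hxy⟩ := int_eq_of_close m m' (pvec n j) (pvec n j')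
      (by linarith) (by linarith) (by linarith) (by linarith) (by linarith)
    exact ⟨rfl, pvec_inj n j j' (by linarith), hm⟩

/-- The lower bound: any word lying in the coset `t(ε_i)W₀` has length at least `i`. -/
lemma lower_bound (n : ℕ) (hn : 2 ≤ n) (i : ℕ) (h1 : 1 ≤ i) (h2 : i ≤ n)
    (L : List ℕ) (hL : ∀ k ∈ L, k ≤ n) (w : (Module.End ℝ (F n))ˣ) (hw : w ∈ W0grp n)
    (heq : du n L = tU n (eps n i).1 * w) : i ≤ L.length := by
  obtain ⟨s, hs, hΦ⟩ := key_states n hn L hL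
  obtain ⟨π, hπ⟩ := W0_signed n hn w hw
  set j0 : Fin n := ⟨i-1, by omega⟩ with hj0
  set a0 : Fin n := π.symm j0 with ha0
  obtain ⟨ε, hε, hwa⟩ := hπ a0
  have hπa : π a0 = j0 := Equiv.apply_symm_apply π j0
  have hq : Qf n (du n L) a0 = ε * (pvec n j0 - 1) := by
    unfold Qf
    rw [heq, mul_val_apply, hwa, hπa]
    have htu : (tU n (eps n i).1).val = tMap n (eps n i).1 := rfl
    rw [htu, tMap_apply]
    have hvv : (((eps n i).1, (0:ℝ)) : F n) = Ev n j0 := by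
      rw [eps_eq_Ev n i h1 h2]
      rfl
    rw [hvv, bform_smul_left, bform_Ev_left, Ev_fst_apply, if_pos rfl, mul_one,
      lamP_sub, lamP_smul, lamP_smul, lamP_Ev, lamP_cvec]
    ring
  have hsv : sval n (s a0) = ε * (pvec n j0 - 1) := by rw [← hs a0, hq]
  have hbound : (i:ℤ) ≤ gcost n a0 (s a0) := by
    rcases hε with rfl | rfl
    · have hval : sval n (s a0) = sval n (true, j0, -1) := by
        rw [hsv]; unfold sval; norm_num; ring
      obtain ⟨hb, hj, hm⟩ := sval_determined n (s a0).1 true (s a0).2.1 j0 (s a0).2.2 (-1)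
        (by rw [← hval])
      unfold gcost
      rw [hm, hj]
      have hjv : (j0.val : ℤ) = (i:ℤ) - 1 := by
        have : j0.val = i - 1 := rfl
        omega
      norm_num
      omega
    · have hval : sval n (s a0) = sval n (false, j0, 1) := by
        rw [hsv]; unfold sval; norm_num; ring
      obtain ⟨hb, hj, hm⟩ := sval_determined n (s a0).1 false (s a0).2.1 j0 (s a0).2.2 1
        (by rw [← hval])
      unfold gcost
      rw [hm, hj]
      have hjv : (j0.val : ℤ) = (i:ℤ) - 1 := by
        have : j0.val = i - 1 := rfl
        omega
      norm_num
      omega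
  have hsum : gcost n a0 (s a0) ≤ Phi n s :=
    Finset.single_le_sum (fun a _ => gcost_nonneg n a (s a)) (Finset.mem_univ a0)
  have : (i:ℤ) ≤ (L.length:ℤ) := le_trans hbound (le_trans hsum hΦ)
  exact_mod_cast this

end Aux3

section Aux4

set_option maxHeartbeats 1000000

lemma Ev_congr (n : ℕ) (a b : Fin n) (h : (a:ℕ) = (b:ℕ)) : Ev n a = Ev n b :=
  congrArg (Ev n) (Fin.ext h)

lemma end_ext (n : ℕ) (f h : Module.End ℝ (F n))
    (hE : ∀ a, f (Ev n a) = h (Ev n a)) (hc : f (cvec n) = h (cvec n)) : f = h := by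
  apply LinearMap.ext; intro g
  have hg : g = (∑ a, g.1 a • Ev n a) + g.2 • cvec n := by
    refine Prod.ext ?_ ?_
    · rw [Prod.fst_add, Prod.fst_sum]
      funext b
      simp [Ev, cvec, Pi.single_apply, mul_ite]
    · rw [Prod.snd_add, Prod.snd_sum]
      simp [Ev, cvec]
  rw [hg, map_add, map_add, map_smul, map_smul, map_sum, map_sum, hc]
  congr 1
  exact Finset.sum_congr rfl fun a _ => by rw [map_smul, map_smul, hE a]

lemma du_mem_W0 (n : ℕ) (L : List ℕ) (h : ∀ k ∈ L, 1 ≤ k ∧ k ≤ n) : du n L ∈ W0grp n := by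
  induction L with
  | nil => rw [du_nil]; exact Subgroup.one_mem _
  | cons k L ih =>
      rw [du_cons]
      refine Subgroup.mul_mem _ ?_ (ih fun j hj => h j (List.mem_cons_of_mem _ hj))
      apply Subgroup.subset_closure
      exact ⟨k, Set.mem_Icc.mpr (h k (List.mem_cons_self)), rfl⟩

/-- Action of `s_m ⋯ s_1` on the basis. -/
lemma Cprod_spec (n : ℕ) (hn : 2 ≤ n) (m : ℕ) (hm : m ≤ n - 1) :
    (∀ a b : Fin n, (a:ℕ) = 0 → (b:ℕ) = m →
      (du n ((List.range' 1 m).reverse)).val (Ev n a) = Ev n b) ∧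
    (∀ a b : Fin n, 1 ≤ (a:ℕ) → (a:ℕ) ≤ m → (b:ℕ) = (a:ℕ) - 1 →
      (du n ((List.range' 1 m).reverse)).val (Ev n a) = Ev n b) ∧
    (∀ a : Fin n, m < (a:ℕ) →
      (du n ((List.range' 1 m).reverse)).val (Ev n a) = Ev n a) := by
  induction m with
  | zero =>
      refine ⟨?_, ?_, ?_⟩
      · intro a b ha hb
        have : a = b := Fin.ext (by first | omega | (simp only [Fin.val_mk]; omega))
        rw [this]; rfl
      · intro a b ha1 ha2 hb
        omega
      · intro a ha
        rfl
  | succ m ih =>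
      have hm' : m ≤ n - 1 := by first | omega | (simp only [Fin.val_mk]; omega)
      obtain ⟨ih0, ih1, ih2⟩ := ih hm'
      have hrev : (List.range' 1 (m+1)).reverse = (1+1*m) :: (List.range' 1 m).reverse := by
        rw [List.range'_concat, List.reverse_append]
        simp
      have hx : 1+1*m = m+1 := by first | omega | (simp only [Fin.val_mk]; omega)
      rw [hrev, hx]
      have hk1 : 1 ≤ m+1 := by first | omega | (simp only [Fin.val_mk]; omega)
      have hk2 : m+1 ≤ n-1 := by first | omega | (simp only [Fin.val_mk]; omega)
      refine ⟨?_, ?_, ?_⟩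
      · intro a b ha hb
        rw [du_cons, mul_val_apply, ih0 a ⟨m, by first | omega | (simp only [Fin.val_mk]; omega)⟩ ha rfl]
        have hlo := sgen_mid_Ev_lo n (m+1) hk1 hk2 hn
        have he1 : (⟨m+1-1, by first | omega | (simp only [Fin.val_mk]; omega)⟩ : Fin n) = ⟨m, by first | omega | (simp only [Fin.val_mk]; omega)⟩ := Fin.ext (by first | omega | (simp only [Fin.val_mk]; omega))
        rw [he1] at hlo
        rw [hlo]
        exact Ev_congr n _ b (by first | omega | (simp only [Fin.val_mk]; omega))
      · intro a b ha1 ha2 hb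
        by_cases ham : (a:ℕ) ≤ m
        · rw [du_cons, mul_val_apply, ih1 a ⟨(a:ℕ)-1, by first | omega | (simp only [Fin.val_mk]; omega)⟩ ha1 ham rfl]
          rw [sgen_mid_Ev_other n (m+1) hk1 hk2 hn _
            (show (a:ℕ)-1 ≠ m+1-1 by first | omega | (simp only [Fin.val_mk]; omega)) (show (a:ℕ)-1 ≠ m+1 by first | omega | (simp only [Fin.val_mk]; omega))]
          exact Ev_congr n _ b (by first | omega | (simp only [Fin.val_mk]; omega))
        · have ham' : (a:ℕ) = m+1 := by first | omega | (simp only [Fin.val_mk]; omega)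
          rw [du_cons, mul_val_apply, ih2 a (by first | omega | (simp only [Fin.val_mk]; omega))]
          have hae : a = ⟨m+1, by first | omega | (simp only [Fin.val_mk]; omega)⟩ := Fin.ext ham'
          have hhi := sgen_mid_Ev_hi n (m+1) hk1 hk2 hn
          rw [hae, hhi]
          exact Ev_congr n _ b (by first | omega | (simp only [Fin.val_mk]; omega))
      · intro a ha
        rw [du_cons, mul_val_apply, ih2 a (by first | omega | (simp only [Fin.val_mk]; omega))]
        exact sgen_mid_Ev_other n (m+1) hk1 hk2 hn a (by first | omega | (simp only [Fin.val_mk]; omega)) (by first | omega | (simp only [Fin.val_mk]; omega))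

lemma Cprod_cvec (n : ℕ) (hn : 2 ≤ n) (m : ℕ) (hm : m ≤ n - 1) :
    (du n ((List.range' 1 m).reverse)).val (cvec n) = cvec n := by
  apply du_cvec n hn
  intro k hk
  rw [List.mem_reverse, List.mem_range'_1] at hk
  omega

/-- Action of `s_j s_{j+1} ⋯ s_{j+m-1}` on the basis. -/
lemma Dprod_spec (n : ℕ) (hn : 2 ≤ n) (m : ℕ) : ∀ j : ℕ, 1 ≤ j → j + m ≤ n →
    (∀ a b : Fin n, j-1 ≤ (a:ℕ) → (a:ℕ)+2 ≤ j+m → (b:ℕ) = (a:ℕ)+1 →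
      (du n (List.range' j m)).val (Ev n a) = Ev n b) ∧
    (∀ a b : Fin n, (a:ℕ) = j+m-1 → (b:ℕ) = j-1 →
      (du n (List.range' j m)).val (Ev n a) = Ev n b) ∧
    (∀ a : Fin n, (a:ℕ) < j-1 ∨ j+m-1 < (a:ℕ) →
      (du n (List.range' j m)).val (Ev n a) = Ev n a) := by
  induction m with
  | zero =>
      intro j hj hjm
      refine ⟨?_, ?_, ?_⟩
      · intro a b ha1 ha2 hb
        omega
      · intro a b ha hb
        have : a = b := Fin.ext (by first | omega | (simp only [Fin.val_mk]; omega))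
        rw [this]; rfl
      · intro a ha
        rfl
  | succ m ih =>
      intro j hj hjm
      obtain ⟨d1, d2, d3⟩ := ih (j+1) (by first | omega | (simp only [Fin.val_mk]; omega)) (by first | omega | (simp only [Fin.val_mk]; omega))
      have hrs : List.range' j (m+1) = j :: List.range' (j+1) m := by
        rw [List.range'_succ]
      have hj2 : j ≤ n - 1 := by first | omega | (simp only [Fin.val_mk]; omega)
      rw [hrs, du_cons]
      refine ⟨?_, ?_, ?_⟩
      · intro a b ha1 ha2 hb
        by_cases hea : (a:ℕ) = j-1
        · rw [mul_val_apply, d3 a (Or.inl (by first | omega | (simp only [Fin.val_mk]; omega)))]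
          have hae : a = ⟨j-1, by first | omega | (simp only [Fin.val_mk]; omega)⟩ := Fin.ext hea
          rw [hae, sgen_mid_Ev_lo n j hj hj2 hn]
          exact Ev_congr n _ b (by first | omega | (simp only [Fin.val_mk]; omega))
        · rw [mul_val_apply, d1 a ⟨(a:ℕ)+1, by first | omega | (simp only [Fin.val_mk]; omega)⟩ (by first | omega | (simp only [Fin.val_mk]; omega)) (by first | omega | (simp only [Fin.val_mk]; omega)) rfl]
          rw [sgen_mid_Ev_other n j hj hj2 hn _
            (show (a:ℕ)+1 ≠ j-1 by first | omega | (simp only [Fin.val_mk]; omega)) (show (a:ℕ)+1 ≠ j by first | omega | (simp only [Fin.val_mk]; omega))]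
          exact Ev_congr n _ b (by first | omega | (simp only [Fin.val_mk]; omega))
      · intro a b ha hb
        rw [mul_val_apply, d2 a ⟨j, by first | omega | (simp only [Fin.val_mk]; omega)⟩ (by first | omega | (simp only [Fin.val_mk]; omega)) rfl]
        have hhi := sgen_mid_Ev_hi n j hj hj2 hn
        have he : (⟨j, by first | omega | (simp only [Fin.val_mk]; omega)⟩ : Fin n) = ⟨j, by first | omega | (simp only [Fin.val_mk]; omega)⟩ := rfl
        rw [hhi]
        exact Ev_congr n _ b (by first | omega | (simp only [Fin.val_mk]; omega))
      · intro a ha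
        rw [mul_val_apply, d3 a (by first | omega | (simp only [Fin.val_mk]; omega))]
        exact sgen_mid_Ev_other n j hj hj2 hn a (by first | omega | (simp only [Fin.val_mk]; omega)) (by first | omega | (simp only [Fin.val_mk]; omega))

lemma tU_Ev (n i : ℕ) (h1 : 1 ≤ i) (h2 : i ≤ n) (b : Fin n) :
    (tU n (eps n i).1).val (Ev n b) =
      Ev n b - (if (b:ℕ) = i-1 then (1:ℝ) else 0) • cvec n := by
  have htu : (tU n (eps n i).1).val = tMap n (eps n i).1 := rfl
  rw [htu, tMap_apply]
  have hvv : (((eps n i).1, (0:ℝ)) : F n) = Ev n ⟨i-1, by omega⟩ := by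
    rw [eps_eq_Ev n i h1 h2]
    rfl
  rw [hvv, bform_Ev_right, Ev_fst_apply]
  congr 2
  by_cases hb : (b:ℕ) = i-1
  · rw [if_pos hb, if_pos (Fin.ext hb).symm]
  · rw [if_neg hb, if_neg (fun he => hb (congrArg Fin.val he.symm))]

lemma tU_cvec (n i : ℕ) (h1 : 1 ≤ i) (h2 : i ≤ n) :
    (tU n (eps n i).1).val (cvec n) = cvec n := by
  have htu : (tU n (eps n i).1).val = tMap n (eps n i).1 := rfl
  rw [htu, tMap_apply]
  have hvv : (((eps n i).1, (0:ℝ)) : F n) = Ev n ⟨i-1, by omega⟩ := by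
    rw [eps_eq_Ev n i h1 h2]
    rfl
  rw [hvv, bform_Ev_right]
  have h0 : (cvec n).1 ⟨i-1, by first | omega | (simp only [Fin.val_mk]; omega)⟩ = 0 := rfl
  rw [h0]
  simp

/-- Existence of the coset representative. -/
lemma exists_w (n : ℕ) (hn : 2 ≤ n) (i : ℕ) (h1 : 1 ≤ i) (h2 : i ≤ n) :
    ∃ w ∈ W0grp n, du n ((List.range i).reverse) = tU n (eps n i).1 * w := by
  classical
  set Lw : List ℕ := (List.range' 1 (i-1)).reverse ++
    (List.range' 1 (n-1) ++ (n :: (List.range' 1 (n-1)).reverse)) with hLw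
  obtain ⟨c1, c2, c3⟩ := Cprod_spec n hn (i-1) (by first | omega | (simp only [Fin.val_mk]; omega))
  obtain ⟨c1', c2', c3'⟩ := Cprod_spec n hn (n-1) (by first | omega | (simp only [Fin.val_mk]; omega))
  obtain ⟨d1, d2, d3⟩ := Dprod_spec n hn (n-1) 1 le_rfl (by first | omega | (simp only [Fin.val_mk]; omega))
  refine ⟨du n Lw, ?_, ?_⟩
  · apply du_mem_W0
    intro k hk
    rw [hLw] at hk
    simp only [List.mem_append, List.mem_reverse, List.mem_cons, List.mem_range'_1] at hk
    rcases hk with h | h | h | h <;> omega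
  · -- rewrite the LHS word
    have hrange : (List.range i).reverse = (List.range' 1 (i-1)).reverse ++ [0] := by
      obtain ⟨i', rfl⟩ : ∃ i', i = i'+1 := ⟨i-1, by first | omega | (simp only [Fin.val_mk]; omega)⟩
      rw [List.range_eq_range', List.range'_succ]
      simp
    rw [hrange, du_concat]
    have hsplit : du n Lw = du n ((List.range' 1 (i-1)).reverse) *
        (du n (List.range' 1 (n-1)) *
          (sgen n n * du n ((List.range' 1 (n-1)).reverse))) := by
      rw [hLw, du_append, du_append, du_cons]
    rw [hsplit]
    refine Units.ext ?_
    apply end_ext n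
    · intro a
      rcases Nat.lt_or_ge (a:ℕ) 1 with ha | ha
      · -- a = 0
        have ha0 : (a:ℕ) = 0 := by first | omega | (simp only [Fin.val_mk]; omega)
        have hae : a = ⟨0, by first | omega | (simp only [Fin.val_mk]; omega)⟩ := Fin.ext ha0
        rw [mul_val_apply, hae, sgen_zero_Ev_zero n hn, map_add, map_neg,
          c1 ⟨0, by first | omega | (simp only [Fin.val_mk]; omega)⟩ ⟨i-1, by first | omega | (simp only [Fin.val_mk]; omega)⟩ rfl rfl, Cprod_cvec n hn (i-1) (by first | omega | (simp only [Fin.val_mk]; omega))]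
        -- RHS
        rw [mul_val_apply, mul_val_apply, mul_val_apply, mul_val_apply,
          c1' ⟨0, by first | omega | (simp only [Fin.val_mk]; omega)⟩ ⟨n-1, by first | omega | (simp only [Fin.val_mk]; omega)⟩ rfl rfl]
        have htop := sgen_top_Ev_top n hn
        rw [htop, map_neg, map_neg, d2 ⟨n-1, by first | omega | (simp only [Fin.val_mk]; omega)⟩ ⟨0, by first | omega | (simp only [Fin.val_mk]; omega)⟩ (by first | omega | (simp only [Fin.val_mk]; omega)) rfl,
          c1 ⟨0, by first | omega | (simp only [Fin.val_mk]; omega)⟩ ⟨i-1, by first | omega | (simp only [Fin.val_mk]; omega)⟩ rfl rfl, map_neg, tU_Ev n i h1 h2,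
          if_pos (show ((⟨i-1, by first | omega | (simp only [Fin.val_mk]; omega)⟩ : Fin n):ℕ) = i-1 from rfl)]
        match_scalars <;> ring
      · rcases Nat.lt_or_ge (a:ℕ) i with hai | hai
        · -- 1 ≤ a ≤ i-1
          rw [mul_val_apply, sgen_zero_Ev_other n hn a (by first | omega | (simp only [Fin.val_mk]; omega)),
            c2 a ⟨(a:ℕ)-1, by first | omega | (simp only [Fin.val_mk]; omega)⟩ ha (by first | omega | (simp only [Fin.val_mk]; omega)) rfl]
          rw [mul_val_apply, mul_val_apply, mul_val_apply, mul_val_apply,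
            c2' a ⟨(a:ℕ)-1, by first | omega | (simp only [Fin.val_mk]; omega)⟩ ha (by first | omega | (simp only [Fin.val_mk]; omega)) rfl,
            sgen_top_Ev_other n hn _ (show (a:ℕ)-1 ≠ n-1 by first | omega | (simp only [Fin.val_mk]; omega)),
            d1 ⟨(a:ℕ)-1, by first | omega | (simp only [Fin.val_mk]; omega)⟩ a (by first | omega | (simp only [Fin.val_mk]; omega)) (by first | omega | (simp only [Fin.val_mk]; omega)) (by first | omega | (simp only [Fin.val_mk]; omega)),
            c2 a ⟨(a:ℕ)-1, by first | omega | (simp only [Fin.val_mk]; omega)⟩ ha (by first | omega | (simp only [Fin.val_mk]; omega)) rfl,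
            tU_Ev n i h1 h2, if_neg (show ¬((⟨(a:ℕ)-1, by first | omega | (simp only [Fin.val_mk]; omega)⟩ : Fin n):ℕ) = i-1 by
              show ¬((a:ℕ)-1 = i-1); omega)]
          match_scalars <;> ring
        · -- a ≥ i
          rw [mul_val_apply, sgen_zero_Ev_other n hn a (by first | omega | (simp only [Fin.val_mk]; omega)), c3 a (by first | omega | (simp only [Fin.val_mk]; omega))]
          rw [mul_val_apply, mul_val_apply, mul_val_apply, mul_val_apply,
            c2' a ⟨(a:ℕ)-1, by first | omega | (simp only [Fin.val_mk]; omega)⟩ (by first | omega | (simp only [Fin.val_mk]; omega)) (by first | omega | (simp only [Fin.val_mk]; omega)) rfl,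
            sgen_top_Ev_other n hn _ (show (a:ℕ)-1 ≠ n-1 by first | omega | (simp only [Fin.val_mk]; omega)),
            d1 ⟨(a:ℕ)-1, by first | omega | (simp only [Fin.val_mk]; omega)⟩ a (by first | omega | (simp only [Fin.val_mk]; omega)) (by first | omega | (simp only [Fin.val_mk]; omega)) (by first | omega | (simp only [Fin.val_mk]; omega)),
            c3 a (by first | omega | (simp only [Fin.val_mk]; omega)),
            tU_Ev n i h1 h2, if_neg (show ¬((a:ℕ) = i-1) by first | omega | (simp only [Fin.val_mk]; omega))]
          match_scalars <;> ring
    · -- cvec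
      rw [mul_val_apply, sgen_zero_cvec n hn, Cprod_cvec n hn (i-1) (by first | omega | (simp only [Fin.val_mk]; omega))]
      rw [mul_val_apply, mul_val_apply, mul_val_apply, mul_val_apply,
        Cprod_cvec n hn (n-1) (by first | omega | (simp only [Fin.val_mk]; omega)), sgen_top_cvec n hn]
      have hD : (du n (List.range' 1 (n-1))).val (cvec n) = cvec n := by
        apply du_cvec n hn
        intro k hk
        rw [List.mem_range'_1] at hk
        omega
      rw [hD, Cprod_cvec n hn (i-1) (by first | omega | (simp only [Fin.val_mk]; omega)), tU_cvec n i h1 h2]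

end Aux4

/-- `w(ε_i) = s_{i−1} ⋯ s_1 s_0` lies in the coset `t(ε_i)·W_0`, and is a
shortest element of that coset: any word in `s_0, …, s_n` lying in `t(ε_i)·W_0` has length
at least `i`. -/
theorem shortest_coset_representative (n : ℕ) (hn : 2 ≤ n)
    (i : ℕ) (h1 : 1 ≤ i) (h2 : i ≤ n) :
    (∃ w ∈ W0grp n, du n ((List.range i).reverse) = tU n (eps n i).1 * w) ∧
    (∀ L : List ℕ, (∀ k ∈ L, k ≤ n) →
      (∃ w ∈ W0grp n, du n L = tU n (eps n i).1 * w) → i ≤ L.length) := by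
  constructor
  · exact exists_w n hn i h1 h2
  · rintro L hL ⟨w, hw, heq⟩
    exact lower_bound n hn i h1 h2 L hL w hw heq

end CvC
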